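/- For n ≥ 1 an integer, Pe > 0, and φ ∈ (1/2,1), the eigenvalue λ = −1 − (2πn)² + √(1 + (2πn·Pe)²(1−φ)(2φ−1)) is positive if and only if Pe²(1−φ)(2φ−1) > 2 + (2πn)². In particular, there exists an integer n ≥ 1 with λ > 0 if and only if Pe²(1−φ)(2φ−1) > 2 + 4π². -/
import Mathlib


open Real

theorem aux_mode (Pe φ : ℝ) (hPe : 0 < Pe) (hφ : φ ∈ Set.Ioo (1/2 : ℝ) 1)
    (a : ℝ) (ha : 0 < a) :
    (0 < -1 - a ^ 2 + Real.sqrt (1 + (a * Pe) ^ 2 * ((1 - φ) * (2 * φ - 1))) ↔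
      Pe ^ 2 * ((1 - φ) * (2 * φ - 1)) > 2 + a ^ 2) := by
  obtain ⟨hφ1, hφ2⟩ := hφ
  have hc : 0 < (1 - φ) * (2 * φ - 1) := by nlinarith
  have h1 : (0:ℝ) ≤ 1 + a ^ 2 := by positivity
  constructor
  · intro h
    have hs : 1 + a ^ 2 < Real.sqrt (1 + (a * Pe) ^ 2 * ((1 - φ) * (2 * φ - 1))) := by
      linarith
    rw [Real.lt_sqrt h1] at hs
    nlinarith [sq_nonneg a, sq_nonneg Pe]
  · intro h
    have hlt : (1 + a ^ 2) ^ 2 < 1 + (a * Pe) ^ 2 * ((1 - φ) * (2 * φ - 1)) := by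
      nlinarith [mul_lt_mul_of_pos_left h (pow_pos ha 2)]
    have hs := (Real.lt_sqrt h1).2 hlt
    linarith

/-- Instability criterion for the full one-dimensional crowded Goldstein–Taylor
operator: for `φ ∈ (1/2,1)`, the eigenvalue
`λ = −1 − (2πn)² + √(1 + (2πnPe)²(1−φ)(2φ−1))` is positive iff
`Pe²(1−φ)(2φ−1) > 2 + (2πn)²`; some mode `n ≥ 1` is unstable iff
`Pe²(1−φ)(2φ−1) > 2 + 4π²`. -/
theorem stmt11 (Pe φ : ℝ) (hPe : 0 < Pe) (hφ : φ ∈ Set.Ioo (1/2 : ℝ) 1) :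
    (∀ n : ℕ, 1 ≤ n →
      (0 < -1 - (2 * π * n) ^ 2
          + Real.sqrt (1 + (2 * π * n * Pe) ^ 2 * ((1 - φ) * (2 * φ - 1))) ↔
        Pe ^ 2 * ((1 - φ) * (2 * φ - 1)) > 2 + (2 * π * n) ^ 2)) ∧
    ((∃ n : ℕ, 1 ≤ n ∧
        0 < -1 - (2 * π * n) ^ 2
          + Real.sqrt (1 + (2 * π * n * Pe) ^ 2 * ((1 - φ) * (2 * φ - 1)))) ↔
      Pe ^ 2 * ((1 - φ) * (2 * φ - 1)) > 2 + 4 * π ^ 2) := by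
  have hpi := Real.pi_pos
  have key : ∀ n : ℕ, 1 ≤ n →
      (0 < -1 - (2 * π * n) ^ 2
          + Real.sqrt (1 + (2 * π * n * Pe) ^ 2 * ((1 - φ) * (2 * φ - 1))) ↔
        Pe ^ 2 * ((1 - φ) * (2 * φ - 1)) > 2 + (2 * π * n) ^ 2) := by
    intro n hn
    have hn' : (1:ℝ) ≤ n := by exact_mod_cast hn
    exact aux_mode Pe φ hPe hφ (2 * π * n) (by nlinarith)
  refine ⟨key, ?_, ?_⟩
  · rintro ⟨n, hn, h⟩
    have hn' : (1:ℝ) ≤ n := by exact_mod_cast hn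
    have := (key n hn).1 h
    nlinarith [mul_nonneg (by positivity : (0:ℝ) ≤ 4 * π ^ 2)
      (by nlinarith : (0:ℝ) ≤ (n:ℝ) ^ 2 - 1)]
  · intro h
    refine ⟨1, le_refl 1, (key 1 le_rfl).2 ?_⟩
    push_cast
    nlinarith
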